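/- For any string w and any symbol c, sre(w) ≤ sre(wc) ≤ sre(w) + 2, where wc denotes the string w with c appended at the end. -/

import Mathlib

variable {α : Type*}

/-- `x` is a right-maximal substring of `w`. -/
def RightMaximal (w x : List α) : Prop :=
  ∃ a b : α, a ≠ b ∧ (x ++ [a]) <:+: w ∧ (x ++ [b]) <:+: w

/-- `y` is a right-extension of `w`. -/
def RightExt (w y : List α) : Prop :=
  ∃ (x : List α) (a : α), RightMaximal w x ∧ y = x ++ [a] ∧ y <:+: w

/-- `y` is a supermaximal right-extension of `w`: a right-extension that is not a
proper suffix of any other right-extension. -/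
def Supermaximal (w y : List α) : Prop :=
  RightExt w y ∧ ∀ z, RightExt w z → y <:+ z → z = y

/-- The number of supermaximal right-extensions of `w`. -/
noncomputable def sre (w : List α) : ℕ :=
  {y | Supermaximal w y}.ncard

/-! ### Auxiliary lemmas -/

private lemma infix_finite (w : List α) : {y : List α | y <:+: w}.Finite := by
  apply Set.Finite.subset (w.tails.flatMap List.inits).finite_toSet
  intro y hy
  rw [Set.mem_setOf_eq, List.infix_iff_prefix_suffix] at hy
  obtain ⟨t, h1, h2⟩ := hy
  exact List.mem_flatMap.2 ⟨t, (List.mem_tails _ _).2 h2, (List.mem_inits _ _).2 h1⟩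

private lemma sm_finite (w : List α) : {y : List α | Supermaximal w y}.Finite :=
  (infix_finite w).subset (by rintro y ⟨⟨x, a, _, _, h⟩, -⟩; exact h)

private lemma exists_sm_above {w y : List α} (h : RightExt w y) :
    ∃ z, Supermaximal w z ∧ y <:+ z := by
  have hfin : {z : List α | RightExt w z ∧ y <:+ z}.Finite :=
    ((infix_finite w).subset (by rintro z ⟨⟨x, a, _, _, h⟩, -⟩; exact h))
  obtain ⟨z, ⟨hz, hyz⟩, hmax⟩ :=
    Set.Finite.exists_maximalFor List.length _ hfin ⟨y, h, List.suffix_refl y⟩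
  refine ⟨z, ⟨hz, fun z' hz' hsub => ?_⟩, hyz⟩
  have hlen := hmax (j := z') ⟨hz', hyz.trans hsub⟩ hsub.length_le
  exact (hsub.eq_of_length (le_antisymm hsub.length_le hlen)).symm

private lemma infix_mono {w y : List α} (c : α) (h : y <:+: w) : y <:+: w ++ [c] :=
  h.trans (List.prefix_append w [c]).isInfix

private lemma re_mono {w y : List α} (c : α) (h : RightExt w y) : RightExt (w ++ [c]) y := by
  obtain ⟨x, a, ⟨a', b', hab, ha', hb'⟩, h2, h3⟩ := h
  exact ⟨x, a, ⟨a', b', hab, infix_mono c ha', infix_mono c hb'⟩, h2, infix_mono c h3⟩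

private lemma infix_concat {w y : List α} {c : α} (h : y <:+: w ++ [c]) :
    y <:+: w ∨ y <:+ w ++ [c] := by
  obtain ⟨s, t, hst⟩ := h
  rcases t.eq_nil_or_concat with rfl | ⟨t', d, rfl⟩
  · right; exact ⟨s, by simpa using hst⟩
  · left
    have h2 : (s ++ (y ++ t')) ++ [d] = w ++ [c] := by
      simp only [List.append_assoc]
      simpa [List.append_assoc] using hst
    obtain ⟨h3, -⟩ := List.append_inj' h2 rfl
    exact ⟨s, t', by simpa [List.append_assoc] using h3⟩

private lemma suffix_concat {w x : List α} {c e : α} (h : x ++ [e] <:+ w ++ [c]) :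
    x <:+ w := by
  obtain ⟨s, hs⟩ := h
  have h2 : (s ++ x) ++ [e] = w ++ [c] := by simpa [List.append_assoc] using hs
  obtain ⟨h3, -⟩ := List.append_inj' h2 rfl
  exact ⟨s, h3⟩

private lemma suffix_append_right {x1 x2 : List α} (h : x1 <:+ x2) (t : List α) :
    x1 ++ t <:+ x2 ++ t := by
  obtain ⟨s, rfl⟩ := h
  exact ⟨s, by simp [List.append_assoc]⟩

private lemma t2_step {w : List α} {c : α} {z1 z2 x1 x2 : List α} {a1 a2 : α}
    (h1 : Supermaximal (w ++ [c]) z1) (h2 : Supermaximal (w ++ [c]) z2)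
    (e1 : z1 = x1 ++ [a1]) (e2 : z2 = x2 ++ [a2])
    (hz2w : z2 <:+: w)
    (hu1 : ∀ e : α, x1 ++ [e] <:+: w → e = a1)
    (hx : x1 <:+ x2) : z2 = z1 := by
  have hz2w' : x2 ++ [a2] <:+: w := by rwa [e2] at hz2w
  have hinf : x1 ++ [a2] <:+: w := (suffix_append_right hx [a2]).isInfix.trans hz2w'
  have ha : a2 = a1 := hu1 a2 hinf
  subst ha
  have hsuf : z1 <:+ z2 := by rw [e1, e2]; exact suffix_append_right hx [a2]
  exact h1.2 z2 h2.1 hsuf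

theorem sre_append (w : List α) (c : α) :
    sre w ≤ sre (w ++ [c]) ∧ sre (w ++ [c]) ≤ sre w + 2 := by
  classical
  constructor
  · -- lower bound
    let f : List α → List α := fun y =>
      if h : RightExt (w ++ [c]) y then (exists_sm_above h).choose else []
    have hf : ∀ y, (h : RightExt (w ++ [c]) y) →
        Supermaximal (w ++ [c]) (f y) ∧ y <:+ f y := by
      intro y h
      simp only [f, dif_pos h]
      exact (exists_sm_above h).choose_spec
    refine Set.ncard_le_ncard_of_injOn f ?_ ?_ (sm_finite (w ++ [c]))
    · intro y hy
      exact (hf y (re_mono c hy.1)).1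
    · intro y1 hy1 y2 hy2 heq
      have h1 := hf y1 (re_mono c hy1.1)
      have h2 := hf y2 (re_mono c hy2.1)
      rw [heq] at h1
      rcases List.suffix_or_suffix_of_suffix h1.2 h2.2 with h | h
      · exact (hy1.2 y2 hy2.1 h).symm
      · exact hy2.2 y1 hy1.1 h
  · -- upper bound
    set A := {z : List α | Supermaximal (w ++ [c]) z ∧ RightExt w z} with hAdef
    set T1 := {z : List α | Supermaximal (w ++ [c]) z ∧ z <:+ w ++ [c]} with hT1def
    set T2 := {z : List α | Supermaximal (w ++ [c]) z ∧ ∃ x a, z = x ++ [a] ∧ x <:+ w ∧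
      z <:+: w ∧ (∀ e : α, x ++ [e] <:+: w → e = a)} with hT2def
    have hAsm : A ⊆ {y : List α | Supermaximal (w ++ [c]) y} := fun z hz => hz.1
    have hT1sm : T1 ⊆ {y : List α | Supermaximal (w ++ [c]) y} := fun z hz => hz.1
    have hT2sm : T2 ⊆ {y : List α | Supermaximal (w ++ [c]) y} := fun z hz => hz.1
    have hAfin : A.Finite := (sm_finite (w ++ [c])).subset hAsm
    have hT1fin : T1.Finite := (sm_finite (w ++ [c])).subset hT1sm
    have hT2fin : T2.Finite := (sm_finite (w ++ [c])).subset hT2sm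
    have hcover : {y : List α | Supermaximal (w ++ [c]) y} ⊆ A ∪ T1 ∪ T2 := by
      intro z hz
      obtain ⟨⟨x, a, hRM, hz_eq, hinf⟩, hmax⟩ := hz
      have hzsm : Supermaximal (w ++ [c]) z := ⟨⟨x, a, hRM, hz_eq, hinf⟩, hmax⟩
      rcases infix_concat hinf with hzw | hzsuf
      · by_cases hRMw : RightMaximal w x
        · exact Or.inl (Or.inl ⟨hzsm, x, a, hRMw, hz_eq, hzw⟩)
        · refine Or.inr ⟨hzsm, x, a, hz_eq, ?_, hzw, ?_⟩
          · obtain ⟨a', b', hab, h1, h2⟩ := hRM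
            rcases infix_concat h1 with hi1 | hs1
            · rcases infix_concat h2 with hi2 | hs2
              · exact absurd ⟨a', b', hab, hi1, hi2⟩ hRMw
              · exact suffix_concat hs2
            · exact suffix_concat hs1
          · intro e he
            by_contra hne
            exact hRMw ⟨e, a, hne, he, hz_eq ▸ hzw⟩
      · exact Or.inl (Or.inr ⟨hzsm, hzsuf⟩)
    have hAw : A ⊆ {y : List α | Supermaximal w y} := by
      rintro z ⟨hsm, hre⟩
      exact ⟨hre, fun z' hz' hsub => hsm.2 z' (re_mono c hz') hsub⟩
    have hT1card : T1.ncard ≤ 1 := by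
      rw [Set.ncard_le_one hT1fin]
      rintro z1 ⟨hsm1, hs1⟩ z2 ⟨hsm2, hs2⟩
      rcases List.suffix_or_suffix_of_suffix hs1 hs2 with h | h
      · exact (hsm1.2 z2 hsm2.1 h).symm
      · exact hsm2.2 z1 hsm1.1 h
    have hT2card : T2.ncard ≤ 1 := by
      rw [Set.ncard_le_one hT2fin]
      rintro z1 ⟨hsm1, x1, a1, e1, hx1, hz1w, hu1⟩ z2 ⟨hsm2, x2, a2, e2, hx2, hz2w, hu2⟩
      rcases List.suffix_or_suffix_of_suffix hx1 hx2 with h | h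
      · exact (t2_step hsm1 hsm2 e1 e2 hz2w hu1 h).symm
      · exact t2_step hsm2 hsm1 e2 e1 hz1w hu2 h
    have hAcard : A.ncard ≤ sre w := Set.ncard_le_ncard hAw (sm_finite w)
    calc sre (w ++ [c]) ≤ (A ∪ T1 ∪ T2).ncard :=
            Set.ncard_le_ncard hcover ((hAfin.union hT1fin).union hT2fin)
      _ ≤ (A ∪ T1).ncard + T2.ncard := Set.ncard_union_le _ _
      _ ≤ A.ncard + T1.ncard + T2.ncard := by
            have := Set.ncard_union_le A T1
            omega
      _ ≤ sre w + 1 + 1 := by omega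
      _ = sre w + 2 := by omega
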